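/- Let $q$ be a prime power, $n_1, n_2$ distinct odd primes with $\gcd(q, n_1 n_2)=1$, $n = n_1 n_2$. The cyclic code over $\mathrm{GF}(q)$ of length $n$ with generator polynomial $g(x) = \frac{(x^n-1)(x-1)}{(x^{n_1}-1)(x^{n_2}-1)}$ has dimension $n_1 + n_2 - 1$ and minimum Hamming distance exactly $\min(n_1, n_2)$. -/

import Mathlib

open Finset Polynomial

section Aux

variable {F : Type*} [Field F]

lemma coeff_mul_geomStep (a : Polynomial F) {m : ℕ} (hm : 0 < m) (ha : a.degree < (m : ℕ))
    (k i : ℕ) (hik : i < k * m) :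
    (a * ∑ j ∈ range k, (X : Polynomial F) ^ (j * m)).coeff i = a.coeff (i % m) := by
  rw [Finset.mul_sum, Polynomial.finset_sum_coeff]
  rw [Finset.sum_eq_single (i / m)]
  · rw [Polynomial.coeff_mul_X_pow', if_pos (Nat.div_mul_le_self i m)]
    congr 1
    rw [Nat.mod_def, Nat.mul_comm m (i / m)]
  · intro j hj hji
    rw [Polynomial.coeff_mul_X_pow']
    split
    · apply Polynomial.coeff_eq_zero_of_degree_lt
      refine ha.trans_le (Nat.cast_le.2 ?_)
      rename_i hle
      have hjlt : j < i / m := by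
        rcases lt_or_gt_of_ne hji with h | h
        · exact h
        · exact absurd ((Nat.le_div_iff_mul_le hm).2 hle) (by omega)
      have h1 := Nat.div_mul_le_self i m
      have h2 : j * m + m ≤ i / m * m := by
        have := Nat.mul_le_mul_right m (Nat.succ_le_of_lt hjlt)
        simpa [Nat.succ_mul] using this
      omega
    · rfl
  · intro h
    exact absurd (Finset.mem_range.2 (Nat.div_lt_of_lt_mul (by rwa [mul_comm]))) h

lemma coeff_mul_geomStep_zero (a : Polynomial F) {m : ℕ} (ha : a.degree < (m : ℕ))
    (k i : ℕ) (hik : k * m ≤ i) :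
    (a * ∑ j ∈ range k, (X : Polynomial F) ^ (j * m)).coeff i = 0 := by
  rw [Finset.mul_sum, Polynomial.finset_sum_coeff]
  apply Finset.sum_eq_zero
  intro j hj
  rw [Polynomial.coeff_mul_X_pow']
  split
  · apply Polynomial.coeff_eq_zero_of_degree_lt
    refine ha.trans_le (Nat.cast_le.2 ?_)
    have h2 : j * m + m ≤ k * m := by
      have := Nat.mul_le_mul_right m (Nat.succ_le_of_lt (Finset.mem_range.1 hj))
      simpa [Nat.succ_mul] using this
    omega
  · rfl

lemma isCoprime_geomSum {n1 n2 : ℕ} (h1 : (n1 : F) ≠ 0) (cop : Nat.Coprime n1 n2) :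
    IsCoprime (∑ i ∈ range n1, (X : Polynomial F) ^ i) (∑ i ∈ range n2, (X : Polynomial F) ^ i) := by
  classical
  set S1 : Polynomial F := ∑ i ∈ range n1, (X : Polynomial F) ^ i with hS1def
  set S2 : Polynomial F := ∑ i ∈ range n2, (X : Polynomial F) ^ i with hS2def
  have hev1 : S1.eval 1 = (n1 : F) := by simp [hS1def, eval_finset_sum]
  have hS1ne : S1 ≠ 0 := fun h => h1 (by rw [← hev1, h, eval_zero])
  by_contra hnc
  rw [← EuclideanDomain.gcd_isUnit_iff] at hnc
  have hd0 : EuclideanDomain.gcd S1 S2 ≠ 0 := fun h =>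
    hS1ne ((EuclideanDomain.gcd_eq_zero_iff.1 h).1)
  obtain ⟨π, hirr, hdvd⟩ := WfDvdMonoid.exists_irreducible_factor hnc hd0
  have hπ1 : π ∣ S1 := hdvd.trans (EuclideanDomain.gcd_dvd_left _ _)
  have hπ2 : π ∣ S2 := hdvd.trans (EuclideanDomain.gcd_dvd_right _ _)
  have hd1 : π ∣ (X : Polynomial F) ^ n1 - 1 := hπ1.trans ⟨X - 1, (geom_sum_mul X n1).symm⟩
  have hd2 : π ∣ (X : Polynomial F) ^ n2 - 1 := hπ2.trans ⟨X - 1, (geom_sum_mul X n2).symm⟩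
  set I : Ideal (Polynomial F) := Ideal.span {π}
  set x : Polynomial F ⧸ I := Ideal.Quotient.mk I X with hx
  have hx1 : x ^ n1 = 1 := by
    rw [hx, ← map_pow, ← map_one (Ideal.Quotient.mk I)]
    exact Ideal.Quotient.eq.2 (Ideal.mem_span_singleton.2 hd1)
  have hx2 : x ^ n2 = 1 := by
    rw [hx, ← map_pow, ← map_one (Ideal.Quotient.mk I)]
    exact Ideal.Quotient.eq.2 (Ideal.mem_span_singleton.2 hd2)
  have hxo : x = 1 := by
    have o1 := orderOf_dvd_of_pow_eq_one hx1
    have o2 := orderOf_dvd_of_pow_eq_one hx2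
    have : orderOf x ∣ 1 := cop ▸ Nat.dvd_gcd o1 o2
    exact orderOf_eq_one_iff.1 (Nat.dvd_one.1 this)
  have hπX : π ∣ (X : Polynomial F) - 1 := by
    rw [← Ideal.mem_span_singleton]
    exact Ideal.Quotient.eq.1 (by rw [← hx, hxo, map_one])
  have hassoc : Associated π ((X : Polynomial F) - 1) := by
    have : Irreducible ((X : Polynomial F) - C 1) := Polynomial.irreducible_X_sub_C 1
    rw [map_one] at this
    exact hirr.associated_of_dvd this hπX
  obtain ⟨t, ht⟩ := hassoc.symm.dvd.trans hπ1
  have : S1.eval 1 = 0 := by rw [ht]; simp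
  exact h1 (by rw [← hev1, this])

end Aux

/-- The cyclic code of "dimension" `k` generated by `g`: the `F`-span of
`g, g*X, ..., g*X^(k-1)`, i.e. the polynomial representation of the cyclic code
of length `n` with generator polynomial `g` when `k = n - deg g`. -/
noncomputable def polyCode (F : Type*) [Field F] (g : Polynomial F) (k : ℕ) : Submodule F (Polynomial F) :=
  Submodule.span F {p : Polynomial F | ∃ i < k, p = g * Polynomial.X ^ i}

section Aux2

variable {F : Type*} [Field F]

lemma mem_polyCode {g c : Polynomial F} {k : ℕ} :
    c ∈ polyCode F g k ↔ ∃ f : Polynomial F, f.degree < (k : ℕ) ∧ c = g * f := by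
  constructor
  · intro hc
    refine Submodule.span_induction ?_ ?_ ?_ ?_ hc
    · rintro p ⟨i, hi, rfl⟩
      exact ⟨X ^ i, by rw [Polynomial.degree_X_pow]; exact_mod_cast hi, rfl⟩
    · exact ⟨0, by rw [Polynomial.degree_zero]; exact WithBot.bot_lt_coe k, by simp⟩
    · rintro p q - - ⟨f, hf, rfl⟩ ⟨f', hf', rfl⟩
      exact ⟨f + f', lt_of_le_of_lt (Polynomial.degree_add_le f f') (max_lt hf hf'),
        by ring⟩
    · rintro r p - ⟨f, hf, rfl⟩
      exact ⟨r • f, lt_of_le_of_lt (Polynomial.degree_smul_le r f) hf, by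
        rw [smul_eq_C_mul, smul_eq_C_mul]; ring⟩
  · rintro ⟨f, hf, rfl⟩
    have : g * f = ∑ i ∈ f.support, f.coeff i • (g * X ^ i) := by
      conv_lhs => rw [f.as_sum_support]
      rw [Finset.mul_sum]
      refine Finset.sum_congr rfl fun i _ => ?_
      rw [smul_eq_C_mul, ← Polynomial.C_mul_X_pow_eq_monomial]; ring
    rw [this]
    refine Submodule.sum_mem _ fun i hi => Submodule.smul_mem _ _ (Submodule.subset_span ?_)
    refine ⟨i, ?_, rfl⟩
    have h1 : (i : WithBot ℕ) ≤ f.degree :=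
      Polynomial.le_degree_of_ne_zero (Polynomial.mem_support_iff.1 hi)
    exact_mod_cast h1.trans_lt hf

lemma finrank_polyCode {g : Polynomial F} (hg0 : g ≠ 0) (k : ℕ) :
    Module.finrank F (polyCode F g k) = k := by
  classical
  have hinj : Function.Injective (LinearMap.mulLeft F g) := by
    simpa [Function.Injective] using fun a b h => mul_left_cancel₀ hg0 h
  have hset : {p : Polynomial F | ∃ i < k, p = g * X ^ i}
      = (LinearMap.mulLeft F g) '' ↑((Finset.range k).image fun i => (X : Polynomial F) ^ i) := by
    ext p
    constructor
    · rintro ⟨i, hi, rfl⟩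
      exact ⟨X ^ i, Finset.mem_coe.2 (Finset.mem_image.2 ⟨i, Finset.mem_range.2 hi, rfl⟩), rfl⟩
    · rintro ⟨x, hx, rfl⟩
      simp only [Finset.coe_image, Set.mem_image, Finset.mem_coe, Finset.mem_range] at hx
      obtain ⟨i, hi, rfl⟩ := hx
      exact ⟨i, hi, rfl⟩
  rw [polyCode, hset, Submodule.span_image, ← Polynomial.degreeLT_eq_span_X_pow]
  rw [← LinearEquiv.finrank_eq
    (Submodule.equivMapOfInjective (LinearMap.mulLeft F g) hinj (Polynomial.degreeLT F k))]
  rw [(Polynomial.degreeLTEquiv F k).finrank_eq]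
  exact Module.finrank_fin_fun F

end Aux2

theorem code_Cn1n2_params
    (q : ℕ) (n1 n2 : ℕ) (hp1 : n1.Prime) (hp2 : n2.Prime) (hne : n1 ≠ n2)
    (ho1 : Odd n1) (ho2 : Odd n2)
    (F : Type*) [Field F] [Fintype F] (hcard : Fintype.card F = q)
    (hq : Nat.Coprime q (n1 * n2))
    (g : Polynomial F)
    (hg : g * (((X : Polynomial F) ^ n1 - 1) * ((X : Polynomial F) ^ n2 - 1)) =
      ((X : Polynomial F) ^ (n1 * n2) - 1) * (X - 1)) :
    Module.finrank F (polyCode F g (n1 + n2 - 1)) = n1 + n2 - 1 ∧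
    (∀ c ∈ polyCode F g (n1 + n2 - 1), c ≠ 0 → min n1 n2 ≤ c.support.card) ∧
    (∃ c ∈ polyCode F g (n1 + n2 - 1), c ≠ 0 ∧ c.support.card = min n1 n2) := by
  classical
  have hn1 : 0 < n1 := hp1.pos
  have hn2 : 0 < n2 := hp2.pos
  have hn1' : 2 ≤ n1 := hp1.two_le
  have hn2' : 2 ≤ n2 := hp2.two_le
  have cop : Nat.Coprime n1 n2 := (Nat.coprime_primes hp1 hp2).2 hne
  set n := n1 * n2 with hn
  set k := n1 + n2 - 1 with hk
  -- characteristic facts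
  have hcharF : ∀ m : ℕ, m ∣ n → 0 < m → (m : F) ≠ 0 := by
    intro m hmd hmpos hm0
    have hP : CharP F (ringChar F) := ringChar.charP F
    have hprime : (ringChar F).Prime := CharP.char_is_prime F (ringChar F)
    have hdvd : ringChar F ∣ m := (CharP.cast_eq_zero_iff F (ringChar F) m).1 hm0
    obtain ⟨a, -, hcard'⟩ := FiniteField.card F (ringChar F)
    have hq' : ringChar F ∣ q := by
      rw [← hcard, hcard']
      exact dvd_pow_self _ a.pos.ne'
    have h1 : ringChar F ∣ 1 := hq.gcd_eq_one ▸ Nat.dvd_gcd hq' (hdvd.trans hmd)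
    exact hprime.one_lt.ne' (Nat.dvd_one.1 h1)
  have h1F : (n1 : F) ≠ 0 := hcharF n1 ⟨n2, rfl⟩ hn1
  have h2F : (n2 : F) ≠ 0 := hcharF n2 ⟨n1, mul_comm n1 n2⟩ hn2
  -- the key polynomials
  set S1 : Polynomial F := ∑ i ∈ range n1, (X : Polynomial F) ^ i with hS1def
  set S2 : Polynomial F := ∑ i ∈ range n2, (X : Polynomial F) ^ i with hS2def
  set P : Polynomial F := ∑ j ∈ range n2, (X : Polynomial F) ^ (j * n1) with hPdef
  set Q : Polynomial F := ∑ j ∈ range n1, (X : Polynomial F) ^ (j * n2) with hQdef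
  have hXm : ∀ m : ℕ, 0 < m → (X : Polynomial F) ^ m - 1 ≠ 0 := by
    intro m hm
    simpa using Polynomial.X_pow_sub_C_ne_zero hm (1 : F)
  have hX1 : (X : Polynomial F) - 1 ≠ 0 := by simpa using hXm 1 one_pos
  have hg0 : g ≠ 0 := by
    intro h
    rw [h, zero_mul] at hg
    exact (mul_ne_zero (hXm n (by positivity)) hX1) hg.symm
  have hP' : P * ((X : Polynomial F) ^ n1 - 1) = (X : Polynomial F) ^ n - 1 := by
    have h := geom_sum_mul ((X : Polynomial F) ^ n1) n2
    have e1 : ∀ j : ℕ, ((X : Polynomial F) ^ n1) ^ j = X ^ (j * n1) := by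
      intro j; rw [← pow_mul, mul_comm]
    have e2 : ((X : Polynomial F) ^ n1) ^ n2 = X ^ n := by rw [← pow_mul, hn]
    rw [Finset.sum_congr rfl (fun j _ => e1 j), e2] at h
    exact h
  have hQ' : Q * ((X : Polynomial F) ^ n2 - 1) = (X : Polynomial F) ^ n - 1 := by
    have h := geom_sum_mul ((X : Polynomial F) ^ n2) n1
    have e1 : ∀ j : ℕ, ((X : Polynomial F) ^ n2) ^ j = X ^ (j * n2) := by
      intro j; rw [← pow_mul, mul_comm]
    have e2 : ((X : Polynomial F) ^ n2) ^ n1 = X ^ n := by rw [← pow_mul, mul_comm, hn]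
    rw [Finset.sum_congr rfl (fun j _ => e1 j), e2] at h
    exact h
  have hgS2 : g * S2 = P := by
    apply mul_right_cancel₀ (mul_ne_zero (hXm n1 hn1) hX1)
    calc g * S2 * (((X : Polynomial F) ^ n1 - 1) * (X - 1))
        = g * (((X : Polynomial F) ^ n1 - 1) * (S2 * (X - 1))) := by ring
      _ = g * (((X : Polynomial F) ^ n1 - 1) * ((X : Polynomial F) ^ n2 - 1)) := by
          rw [hS2def, geom_sum_mul]
      _ = ((X : Polynomial F) ^ n - 1) * (X - 1) := hg
      _ = P * (((X : Polynomial F) ^ n1 - 1) * (X - 1)) := by rw [← hP']; ring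
  have hgS1 : g * S1 = Q := by
    apply mul_right_cancel₀ (mul_ne_zero (hXm n2 hn2) hX1)
    calc g * S1 * (((X : Polynomial F) ^ n2 - 1) * (X - 1))
        = g * (((X : Polynomial F) ^ n2 - 1) * (S1 * (X - 1))) := by ring
      _ = g * (((X : Polynomial F) ^ n2 - 1) * ((X : Polynomial F) ^ n1 - 1)) := by
          rw [hS1def, geom_sum_mul]
      _ = g * (((X : Polynomial F) ^ n1 - 1) * ((X : Polynomial F) ^ n2 - 1)) := by ring
      _ = ((X : Polynomial F) ^ n - 1) * (X - 1) := hg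
      _ = Q * (((X : Polynomial F) ^ n2 - 1) * (X - 1)) := by rw [← hQ']; ring
  -- degrees and monicity of S1, S2
  have hS1mon : S1.Monic := Polynomial.monic_geom_sum_X hn1.ne'
  have hS2mon : S2.Monic := Polynomial.monic_geom_sum_X hn2.ne'
  have hS1ne : S1 ≠ 0 := hS1mon.ne_zero
  have hS2ne : S2 ≠ 0 := hS2mon.ne_zero
  have hS1deg : S1.natDegree = n1 - 1 := by
    have h := Polynomial.natDegree_mul hS1ne hX1
    rw [show S1 * ((X : Polynomial F) - 1) = (X : Polynomial F) ^ n1 - 1 from by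
      rw [hS1def, geom_sum_mul]] at h
    have h1 : ((X : Polynomial F) ^ n1 - 1).natDegree = n1 := by
      simpa using Polynomial.natDegree_X_pow_sub_C (n := n1) (r := (1 : F))
    have h2 : ((X : Polynomial F) - 1).natDegree = 1 := by
      simpa using Polynomial.natDegree_X_sub_C (1 : F)
    rw [h1, h2] at h
    omega
  have hS2deg : S2.natDegree = n2 - 1 := by
    have h := Polynomial.natDegree_mul hS2ne hX1
    rw [show S2 * ((X : Polynomial F) - 1) = (X : Polynomial F) ^ n2 - 1 from by
      rw [hS2def, geom_sum_mul]] at h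
    have h1 : ((X : Polynomial F) ^ n2 - 1).natDegree = n2 := by
      simpa using Polynomial.natDegree_X_pow_sub_C (n := n2) (r := (1 : F))
    have h2 : ((X : Polynomial F) - 1).natDegree = 1 := by
      simpa using Polynomial.natDegree_X_sub_C (1 : F)
    rw [h1, h2] at h
    omega
  -- representation of codewords
  have hrep : ∀ c ∈ polyCode F g k, ∃ a b : Polynomial F,
      a.degree < (n1 : ℕ) ∧ b.degree < (n2 : ℕ) ∧ c = a * P + b * Q := by
    intro c hc
    obtain ⟨f, hf, rfl⟩ := mem_polyCode.1 hc
    obtain ⟨u, v, huv⟩ := isCoprime_geomSum (F := F) h1F cop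
    set a : Polynomial F := (f * v) %ₘ S1 with hadef
    set b : Polynomial F := u * f + (f * v /ₘ S1) * S2 with hbdef
    have hmod := Polynomial.modByMonic_add_div (f * v) S1
    have hfab : f = a * S2 + b * S1 := by
      rw [hadef, hbdef]
      linear_combination -S2 * hmod - f * huv
    have hadeg : a.degree < (n1 : ℕ) := by
      refine (Polynomial.degree_modByMonic_lt _ hS1mon).trans_le ?_
      refine Polynomial.degree_le_natDegree.trans ?_
      rw [hS1deg]
      exact_mod_cast (show n1 - 1 ≤ n1 by omega)
    have hbdeg : b.degree < (n2 : ℕ) := by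
      by_cases hb : b = 0
      · rw [hb, Polynomial.degree_zero]; exact WithBot.bot_lt_coe n2
      have hfb : b * S1 = f - a * S2 := by linear_combination -hfab
      have hanat : a.natDegree ≤ n1 - 1 := by
        by_cases ha : a = 0
        · rw [ha]; simp
        have := Polynomial.natDegree_lt_natDegree ha
          ((Polynomial.degree_modByMonic_lt _ hS1mon))
        omega
      have hfnat : f.natDegree ≤ n1 + n2 - 2 := by
        by_cases hfz : f = 0
        · rw [hfz]; simp
        have := (Polynomial.natDegree_lt_iff_degree_lt hfz).2 hf
        omega
      have hmul : (b * S1).natDegree = b.natDegree + (n1 - 1) := by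
        rw [Polynomial.natDegree_mul hb hS1ne, hS1deg]
      have hsub : (f - a * S2).natDegree ≤ n1 + n2 - 2 := by
        refine (Polynomial.natDegree_sub_le _ _).trans ?_
        refine max_le hfnat ?_
        refine (Polynomial.natDegree_mul_le).trans ?_
        rw [hS2deg]
        omega
      have : b.natDegree ≤ n2 - 1 := by
        rw [hfb] at hmul
        omega
      refine (Polynomial.degree_le_natDegree).trans_lt ?_
      exact_mod_cast (show b.natDegree < n2 by omega)
    refine ⟨a, b, hadeg, hbdeg, ?_⟩
    rw [hfab, ← hgS2, ← hgS1]
    ring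
  -- coefficient formula
  have hcoeff : ∀ a b : Polynomial F, a.degree < (n1 : ℕ) → b.degree < (n2 : ℕ) →
      ∀ i, i < n → (a * P + b * Q).coeff i = a.coeff (i % n1) + b.coeff (i % n2) := by
    intro a b ha hb i hi
    rw [Polynomial.coeff_add, hPdef, hQdef,
      coeff_mul_geomStep a hn1 ha n2 i (by rw [mul_comm n2 n1]; exact hi),
      coeff_mul_geomStep b hn2 hb n1 i (by exact hi)]
  have hcoeff0 : ∀ a b : Polynomial F, a.degree < (n1 : ℕ) → b.degree < (n2 : ℕ) →
      ∀ i, n ≤ i → (a * P + b * Q).coeff i = 0 := by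
    intro a b ha hb i hi
    rw [Polynomial.coeff_add, hPdef, hQdef,
      coeff_mul_geomStep_zero a ha n2 i (by rw [mul_comm n2 n1]; exact hi),
      coeff_mul_geomStep_zero b hb n1 i (by exact hi), add_zero]
  -- support of Q and P
  have hQcoeff : ∀ i, Q.coeff i = if i < n ∧ i % n2 = 0 then 1 else 0 := by
    intro i
    have h1 : Q = 1 * Q := (one_mul Q).symm
    have hdeg1 : (1 : Polynomial F).degree < (n2 : ℕ) := by
      rw [Polynomial.degree_one]
      exact_mod_cast hn2
    by_cases hi : i < n
    · rw [h1, hQdef, coeff_mul_geomStep 1 hn2 hdeg1 n1 i (by exact hi)]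
      rw [Polynomial.coeff_one]
      simp [hi]
    · rw [h1, hQdef, coeff_mul_geomStep_zero 1 hdeg1 n1 i (by exact Nat.le_of_not_lt hi)]
      simp [hi]
  have hQsupp : Q.support = (range n1).image (· * n2) := by
    ext i
    rw [Polynomial.mem_support_iff, hQcoeff i]
    constructor
    · intro h
      by_cases hc : i < n ∧ i % n2 = 0
      · refine Finset.mem_image.2 ⟨i / n2, Finset.mem_range.2 ?_, ?_⟩
        · exact Nat.div_lt_of_lt_mul (show i < n2 * n1 by rw [mul_comm n2 n1]; exact hc.1)
        · exact Nat.div_mul_cancel (Nat.dvd_of_mod_eq_zero hc.2)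
      · simp [hc] at h
    · intro h
      obtain ⟨j, hj, rfl⟩ := Finset.mem_image.1 h
      have hj' := Finset.mem_range.1 hj
      have : j * n2 < n ∧ j * n2 % n2 = 0 := by
        have h1 : j * n2 < n1 * n2 := mul_lt_mul_of_pos_right hj' hn2
        exact ⟨h1, Nat.mul_mod_left j n2⟩
      rw [if_pos this]
      exact one_ne_zero
  have hQcard : Q.support.card = n1 := by
    rw [hQsupp, Finset.card_image_of_injective _ (mul_left_injective₀ hn2.ne'), Finset.card_range]
  have hPcoeff : ∀ i, P.coeff i = if i < n ∧ i % n1 = 0 then 1 else 0 := by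
    intro i
    have h1 : P = 1 * P := (one_mul P).symm
    have hdeg1 : (1 : Polynomial F).degree < (n1 : ℕ) := by
      rw [Polynomial.degree_one]
      exact_mod_cast hn1
    by_cases hi : i < n
    · rw [h1, hPdef, coeff_mul_geomStep 1 hn1 hdeg1 n2 i (by rw [mul_comm n2 n1]; exact hi)]
      rw [Polynomial.coeff_one]
      simp [hi]
    · rw [h1, hPdef, coeff_mul_geomStep_zero 1 hdeg1 n2 i (by rw [mul_comm n2 n1]; exact Nat.le_of_not_lt hi)]
      simp [hi]
  have hPsupp : P.support = (range n2).image (· * n1) := by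
    ext i
    rw [Polynomial.mem_support_iff, hPcoeff i]
    constructor
    · intro h
      by_cases hc : i < n ∧ i % n1 = 0
      · refine Finset.mem_image.2 ⟨i / n1, Finset.mem_range.2 ?_, ?_⟩
        · exact Nat.div_lt_of_lt_mul (show i < n1 * n2 from hc.1)
        · exact Nat.div_mul_cancel (Nat.dvd_of_mod_eq_zero hc.2)
      · simp [hc] at h
    · intro h
      obtain ⟨j, hj, rfl⟩ := Finset.mem_image.1 h
      have hj' := Finset.mem_range.1 hj
      have : j * n1 < n ∧ j * n1 % n1 = 0 := by
        have h1 : j * n1 < n2 * n1 := mul_lt_mul_of_pos_right hj' hn1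
        exact ⟨by rw [hn, mul_comm n1 n2]; exact h1, Nat.mul_mod_left j n1⟩
      rw [if_pos this]
      exact one_ne_zero
  have hPcard : P.support.card = n2 := by
    rw [hPsupp, Finset.card_image_of_injective _ (mul_left_injective₀ hn1.ne'), Finset.card_range]
  refine ⟨finrank_polyCode hg0 k, ?_, ?_⟩
  · -- minimum distance lower bound
    intro c hc hc0
    obtain ⟨a, b, ha, hb, rfl⟩ := hrep c hc
    by_cases hconst : ∀ v < n2, b.coeff v = b.coeff 0
    · -- b is "constant": get a full row of weight n2
      obtain ⟨i0, hi0⟩ : ∃ i, (a * P + b * Q).coeff i ≠ 0 := by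
        by_contra h
        push_neg at h
        exact hc0 (Polynomial.ext fun i => h i)
      have hi0n : i0 < n := by
        by_contra h
        exact hi0 (hcoeff0 a b ha hb i0 (by omega))
      set u0 := i0 % n1 with hu0
      have hval : a.coeff u0 + b.coeff 0 ≠ 0 := by
        have := hcoeff a b ha hb i0 hi0n
        rw [this, hconst (i0 % n2) (Nat.mod_lt _ hn2)] at hi0
        exact hi0
      have hsub : (range n2).image (fun j => u0 + j * n1) ⊆ (a * P + b * Q).support := by
        intro i hi
        obtain ⟨j, hj, rfl⟩ := Finset.mem_image.1 hi
        have hj' := Finset.mem_range.1 hj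
        have hu0lt : u0 < n1 := Nat.mod_lt _ hn1
        have hilt : u0 + j * n1 < n := by
          rw [hn, mul_comm n1 n2]
          have : j * n1 + n1 ≤ n2 * n1 := by
            have := Nat.mul_le_mul_right n1 (Nat.succ_le_of_lt hj')
            simpa [Nat.succ_mul] using this
          omega
        rw [Polynomial.mem_support_iff, hcoeff a b ha hb _ hilt]
        have hm1 : (u0 + j * n1) % n1 = u0 := by
          rw [Nat.add_mul_mod_self_right, Nat.mod_eq_of_lt (Nat.mod_lt _ hn1)]
        rw [hm1, hconst ((u0 + j * n1) % n2) (Nat.mod_lt _ hn2)]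
        exact hval
      have hcard : ((range n2).image (fun j => u0 + j * n1)).card = n2 := by
        rw [Finset.card_image_of_injective, Finset.card_range]
        intro x y hxy
        simp only at hxy
        exact Nat.eq_of_mul_eq_mul_right hn1 (by omega)
      calc min n1 n2 ≤ n2 := min_le_right _ _
        _ = ((range n2).image (fun j => u0 + j * n1)).card := hcard.symm
        _ ≤ (a * P + b * Q).support.card := Finset.card_le_card hsub
    · -- b is not constant: every "row" contributes
      push_neg at hconst
      obtain ⟨v1, hv1lt, hv1⟩ := hconst
      have hchoice : ∀ u, ∃ v < n2, a.coeff u + b.coeff v ≠ 0 := by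
        intro u
        by_cases h : a.coeff u + b.coeff 0 ≠ 0
        · exact ⟨0, hn2, h⟩
        · push_neg at h
          refine ⟨v1, hv1lt, ?_⟩
          intro habs
          exact hv1 (by linear_combination habs - h)
      choose v hvlt hvne using hchoice
      set ψ : ℕ → ℕ := fun u => (Nat.chineseRemainder cop u (v u) : ℕ) % n with hψ
      have hψlt : ∀ u, ψ u < n := fun u => Nat.mod_lt _ (by positivity)
      have hψmod1 : ∀ u, u < n1 → ψ u % n1 = u := by
        intro u hu
        have h := (Nat.chineseRemainder cop u (v u)).2.1
        have hdvd : n1 ∣ n := ⟨n2, rfl⟩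
        have : ψ u % n1 = (Nat.chineseRemainder cop u (v u) : ℕ) % n1 := by
          rw [hψ]
          exact Nat.mod_mod_of_dvd _ hdvd
        rw [this, h, Nat.mod_eq_of_lt hu]
      have hψmod2 : ∀ u, ψ u % n2 = v u := by
        intro u
        have h := (Nat.chineseRemainder cop u (v u)).2.2
        have hdvd : n2 ∣ n := ⟨n1, mul_comm n1 n2⟩
        have : ψ u % n2 = (Nat.chineseRemainder cop u (v u) : ℕ) % n2 := by
          rw [hψ]
          exact Nat.mod_mod_of_dvd _ hdvd
        rw [this, h, Nat.mod_eq_of_lt (hvlt u)]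
      have hsub : (range n1).image ψ ⊆ (a * P + b * Q).support := by
        intro i hi
        obtain ⟨u, hu, rfl⟩ := Finset.mem_image.1 hi
        have hu' := Finset.mem_range.1 hu
        rw [Polynomial.mem_support_iff, hcoeff a b ha hb _ (hψlt u), hψmod1 u hu', hψmod2 u]
        exact hvne u
      have hcard : ((range n1).image ψ).card = n1 := by
        rw [Finset.card_image_of_injOn, Finset.card_range]
        intro x hx y hy hxy
        have hx' := Finset.mem_range.1 hx
        have hy' := Finset.mem_range.1 hy
        rw [← hψmod1 x hx', ← hψmod1 y hy', hxy]
      calc min n1 n2 ≤ n1 := min_le_left _ _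
        _ = ((range n1).image ψ).card := hcard.symm
        _ ≤ (a * P + b * Q).support.card := Finset.card_le_card hsub
  · -- a codeword of minimal weight
    rcases le_total n1 n2 with hle | hle
    · refine ⟨Q, ?_, ?_, ?_⟩
      · refine mem_polyCode.2 ⟨S1, ?_, hgS1.symm⟩
        refine Polynomial.degree_le_natDegree.trans_lt ?_
        rw [hS1deg, hk]
        exact_mod_cast (show n1 - 1 < n1 + n2 - 1 by omega)
      · intro h
        rw [h, Polynomial.support_zero, Finset.card_empty] at hQcard
        omega
      · rw [hQcard, min_eq_left hle]
    · refine ⟨P, ?_, ?_, ?_⟩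
      · refine mem_polyCode.2 ⟨S2, ?_, hgS2.symm⟩
        refine Polynomial.degree_le_natDegree.trans_lt ?_
        rw [hS2deg, hk]
        exact_mod_cast (show n2 - 1 < n1 + n2 - 1 by omega)
      · intro h
        rw [h, Polynomial.support_zero, Finset.card_empty] at hPcard
        omega
      · rw [hPcard, min_eq_right hle]
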